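/- arXiv:2008.03227 — 3 statements merged into one kernel-verified Lean document; each statement's English description precedes it below -/
import Mathlib

section
/- Let φ ∈ C¹(ℝ²,ℝ³) satisfy φ(z)·ω(z) = 0 for every z ∈ ℝ². Then at every point of ℝ² one has ∂ₓφ∧∂_yω + ∂ₓω∧∂_yφ = −μ²φ − (∂ₓφ·∂ₓω + ∂_yφ·∂_yω)·ω. -/
open MeasureTheory Real Filter Topology

noncomputable section

abbrev R2 := ℝ × ℝ
abbrev V3 := Fin 3 → ℝ

/-- Partial derivative in the `x` direction. -/
def pdx {E : Type*} [NormedAddCommGroup E] [NormedSpace ℝ E] (f : R2 → E) (z : R2) : E :=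
  fderiv ℝ f z (1, 0)

/-- Partial derivative in the `y` direction. -/
def pdy {E : Type*} [NormedAddCommGroup E] [NormedSpace ℝ E] (f : R2 → E) (z : R2) : E :=
  fderiv ℝ f z (0, 1)

/-- Euclidean scalar product on `ℝ³`. -/
def dot3 (a b : V3) : ℝ := a 0 * b 0 + a 1 * b 1 + a 2 * b 2

/-- Cross product on `ℝ³`. -/
def cross3 (a b : V3) : V3 :=
  ![a 1 * b 2 - a 2 * b 1, a 2 * b 0 - a 0 * b 2, a 0 * b 1 - a 1 * b 0]

def e1 : V3 := ![1, 0, 0]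
def e2 : V3 := ![0, 1, 0]
def e3 : V3 := ![0, 0, 1]

/-- The conformal factor `μ(z) = 2/(1+|z|²)`. -/
def mu (z : R2) : ℝ := 2 / (1 + z.1 ^ 2 + z.2 ^ 2)

/-- Inverse stereographic projection `ω(z) = (μ x, μ y, 1 − μ)`. -/
def sphOmega (z : R2) : V3 := ![mu z * z.1, mu z * z.2, 1 - mu z]

/-- The conjugate inversion `z ↦ (x,−y)/(x²+y²)`. -/
def invz (z : R2) : R2 := (z.1 / (z.1 ^ 2 + z.2 ^ 2), -z.2 / (z.1 ^ 2 + z.2 ^ 2))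

/-- `u` is of class `C^m(ℝ̄²)`: it is `C^m` on `ℝ²` and `z ↦ u((x,−y)/(x²+y²))`
extends to a `C^m` function on all of `ℝ²`. -/
def CmBar (m : ℕ) {E : Type*} [NormedAddCommGroup E] [NormedSpace ℝ E] (u : R2 → E) : Prop :=
  ContDiff ℝ m u ∧ ∃ v : R2 → E, ContDiff ℝ m v ∧ ∀ z : R2, z ≠ 0 → v z = u (invz z)

/-- `∇f·∇g` for scalar functions. -/
def gdot (f g : R2 → ℝ) (z : R2) : ℝ := pdx f z * pdx g z + pdy f z * pdy g z

/-- `div(a ∇f)` for scalar functions. -/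
def divg (a f : R2 → ℝ) (z : R2) : ℝ :=
  pdx (fun w => a w * pdx f w) z + pdy (fun w => a w * pdy f w) z

/-- `|∇u|² = Σ_j |∇u_j|²`. -/
def gradNormSq (u : R2 → V3) (z : R2) : ℝ := ∑ j, ((pdx u z j) ^ 2 + (pdy u z j) ^ 2)

/-- Componentwise Laplacian. -/
def lapv (u : R2 → V3) (z : R2) : V3 := pdx (pdx u) z + pdy (pdy u) z

/-- `J_K(u) := −div(u₃^{−2}∇u) − u₃^{−3}|∇u|²e₃ + 2·K(u)·u₃^{−3}·∂ₓu∧∂_yu`. -/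
def JK (K : V3 → ℝ) (u : R2 → V3) (z : R2) : V3 := fun l =>
  -divg (fun w => ((u w 2) ^ 2)⁻¹) (fun w => u w l) z
    - ((u z 2) ^ 3)⁻¹ * gradNormSq u z * e3 l
    + 2 * K (u z) * ((u z 2) ^ 3)⁻¹ * cross3 (pdx u z) (pdy u z) l

/-- `J₀'(U)φ`: the pointwise derivative at `t = 0` of `t ↦ J₀(U + tφ)`. -/
def J0lin (k : ℝ) (U φ : R2 → V3) (z : R2) : V3 :=
  deriv (fun t : ℝ => JK (fun _ => k) (fun w => U w + t • φ w) z) 0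

def rk (k : ℝ) : ℝ := (Real.sqrt (k ^ 2 - 1))⁻¹

/-- `𝒰 = r_k(ω + k e₃)`. -/
def Uk (k : ℝ) (z : R2) : V3 := rk k • (sphOmega z + k • e3)

/-- `iz∇u := −y ∂ₓu + x ∂_yu`. -/
def izgrad (u : R2 → V3) (z : R2) : V3 := (-z.2) • pdx u z + z.1 • pdy u z

/-- Pointwise projection orthogonal to `ω`. -/
def Pproj (f : R2 → V3) (z : R2) : V3 := f z - dot3 (f z) (sphOmega z) • sphOmega z

/-- The generic element of `T_ωZ` with parameters `s, t, α`. -/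
def tanZ (k : ℝ) (s t α : V3) (z : R2) : V3 :=
  s - dot3 s (sphOmega z) • sphOmega z + cross3 t (sphOmega z)
    + dot3 α (k • sphOmega z + e3) • sphOmega z

end
set_option maxHeartbeats 1000000 in
/-- If `φ ∈ C¹(ℝ²,ℝ³)` is pointwise orthogonal to `ω`, then
`∂ₓφ∧∂_yω + ∂ₓω∧∂_yφ = −μ²φ − (∂ₓφ·∂ₓω + ∂_yφ·∂_yω)ω` at every point of `ℝ²`. -/
theorem statement5 (φ : R2 → V3) (hφ : ContDiff ℝ 1 φ)
    (horth : ∀ z : R2, dot3 (φ z) (sphOmega z) = 0) (z : R2) :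
    cross3 (pdx φ z) (pdy sphOmega z) + cross3 (pdx sphOmega z) (pdy φ z)
      = -(mu z ^ 2) • φ z
        - (dot3 (pdx φ z) (pdx sphOmega z) + dot3 (pdy φ z) (pdy sphOmega z)) • sphOmega z := by
  have hDpos : (0:ℝ) < 1 + z.1 * z.1 + z.2 * z.2 := by nlinarith [sq_nonneg z.1, sq_nonneg z.2]
  have hDne : (1 + z.1 * z.1 + z.2 * z.2) ≠ 0 := ne_of_gt hDpos
  -- derivative of the denominator
  have hx : HasFDerivAt (fun w : R2 => w.1) (ContinuousLinearMap.fst ℝ ℝ ℝ) z := hasFDerivAt_fst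
  have hy : HasFDerivAt (fun w : R2 => w.2) (ContinuousLinearMap.snd ℝ ℝ ℝ) z := hasFDerivAt_snd
  have hD : HasFDerivAt (fun w : R2 => 1 + w.1 * w.1 + w.2 * w.2)
      ((z.1 • ContinuousLinearMap.fst ℝ ℝ ℝ + z.1 • ContinuousLinearMap.fst ℝ ℝ ℝ)
        + (z.2 • ContinuousLinearMap.snd ℝ ℝ ℝ + z.2 • ContinuousLinearMap.snd ℝ ℝ ℝ)) z :=
    ((hx.mul hx).const_add 1).add (hy.mul hy)
  set LD := ((z.1 • ContinuousLinearMap.fst ℝ ℝ ℝ + z.1 • ContinuousLinearMap.fst ℝ ℝ ℝ)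
        + (z.2 • ContinuousLinearMap.snd ℝ ℝ ℝ + z.2 • ContinuousLinearMap.snd ℝ ℝ ℝ)) with hLD
  have hmu_eq : mu = fun w : R2 => 2 * (1 + w.1 * w.1 + w.2 * w.2)⁻¹ := by
    funext w
    rw [mu, div_eq_mul_inv]
    congr 1
    ring
  have hinv : HasFDerivAt (fun w : R2 => (1 + w.1 * w.1 + w.2 * w.2)⁻¹)
      ((ContinuousLinearMap.smulRight (1 : ℝ →L[ℝ] ℝ)
        (-((1 + z.1 * z.1 + z.2 * z.2) ^ 2)⁻¹)).comp LD) z :=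
    (hasFDerivAt_inv hDne).comp z hD
  set Lmu := (2:ℝ) • ((ContinuousLinearMap.smulRight (1 : ℝ →L[ℝ] ℝ)
        (-((1 + z.1 * z.1 + z.2 * z.2) ^ 2)⁻¹)).comp LD) with hLmu
  have hmu : HasFDerivAt mu Lmu z := by
    rw [hmu_eq]
    exact hinv.const_mul 2
  -- components of sphOmega
  have hc0 : HasFDerivAt (fun w : R2 => mu w * w.1)
      (mu z • ContinuousLinearMap.fst ℝ ℝ ℝ + z.1 • Lmu) z := hmu.mul hx
  have hc1 : HasFDerivAt (fun w : R2 => mu w * w.2)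
      (mu z • ContinuousLinearMap.snd ℝ ℝ ℝ + z.2 • Lmu) z := hmu.mul hy
  have hc2 : HasFDerivAt (fun w : R2 => 1 - mu w) (-Lmu) z := hmu.const_sub 1
  set Lom := ContinuousLinearMap.pi
    ![mu z • ContinuousLinearMap.fst ℝ ℝ ℝ + z.1 • Lmu,
      mu z • ContinuousLinearMap.snd ℝ ℝ ℝ + z.2 • Lmu, -Lmu] with hLom
  have hom : HasFDerivAt sphOmega Lom z := by
    apply hasFDerivAt_pi''
    intro j
    rw [hLom, ContinuousLinearMap.proj_pi]
    fin_cases j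
    · simpa [sphOmega] using hc0
    · simpa [sphOmega] using hc1
    · simpa [sphOmega] using hc2
  have hfd : fderiv ℝ sphOmega z = Lom := hom.fderiv
  have hmuval : mu z = 2 * (1 + z.1 * z.1 + z.2 * z.2)⁻¹ := by rw [hmu_eq]
  have hox : pdx sphOmega z
      = ![mu z - z.1 ^ 2 * mu z ^ 2, -(z.1 * z.2 * mu z ^ 2), z.1 * mu z ^ 2] := by
    rw [pdx, hfd, hLom]
    funext j
    fin_cases j <;>
      · simp only [ContinuousLinearMap.pi_apply, Matrix.cons_val_zero, Matrix.cons_val_one,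
          Matrix.head_cons, Matrix.cons_val_two, Matrix.tail_cons, hLmu, hLD,
          ContinuousLinearMap.add_apply, ContinuousLinearMap.smul_apply,
          ContinuousLinearMap.neg_apply, ContinuousLinearMap.coe_comp', Function.comp_apply,
          ContinuousLinearMap.smulRight_apply, ContinuousLinearMap.one_apply,
          ContinuousLinearMap.coe_fst', ContinuousLinearMap.coe_snd', smul_eq_mul, hmuval]
        norm_num
        field_simp
        ring
  have hoy : pdy sphOmega z
      = ![-(z.1 * z.2 * mu z ^ 2), mu z - z.2 ^ 2 * mu z ^ 2, z.2 * mu z ^ 2] := by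
    rw [pdy, hfd, hLom]
    funext j
    fin_cases j <;>
      · simp only [ContinuousLinearMap.pi_apply, Matrix.cons_val_zero, Matrix.cons_val_one,
          Matrix.head_cons, Matrix.cons_val_two, Matrix.tail_cons, hLmu, hLD,
          ContinuousLinearMap.add_apply, ContinuousLinearMap.smul_apply,
          ContinuousLinearMap.neg_apply, ContinuousLinearMap.coe_comp', Function.comp_apply,
          ContinuousLinearMap.smulRight_apply, ContinuousLinearMap.one_apply,
          ContinuousLinearMap.coe_fst', ContinuousLinearMap.coe_snd', smul_eq_mul, hmuval]
        norm_num
        field_simp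
        ring
  -- derivative of the orthogonality relation
  have hphi : HasFDerivAt φ (fderiv ℝ φ z) z :=
    (hφ.differentiable one_ne_zero z).hasFDerivAt
  have hp : ∀ j : Fin 3, HasFDerivAt (fun w => φ w j)
      ((ContinuousLinearMap.proj j).comp (fderiv ℝ φ z)) z := fun j =>
    (hasFDerivAt_apply (𝕜 := ℝ) j (φ z)).comp z hphi
  have ho : ∀ j : Fin 3, HasFDerivAt (fun w => sphOmega w j)
      ((ContinuousLinearMap.proj j).comp Lom) z := fun j =>
    (hasFDerivAt_apply (𝕜 := ℝ) j (sphOmega z)).comp z hom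
  set LF := ((φ z 0 • (ContinuousLinearMap.proj (0:Fin 3)).comp Lom
      + sphOmega z 0 • (ContinuousLinearMap.proj (0:Fin 3)).comp (fderiv ℝ φ z))
      + (φ z 1 • (ContinuousLinearMap.proj (1:Fin 3)).comp Lom
      + sphOmega z 1 • (ContinuousLinearMap.proj (1:Fin 3)).comp (fderiv ℝ φ z)))
      + (φ z 2 • (ContinuousLinearMap.proj (2:Fin 3)).comp Lom
      + sphOmega z 2 • (ContinuousLinearMap.proj (2:Fin 3)).comp (fderiv ℝ φ z)) with hLF
  have hFz : HasFDerivAt (fun w => φ w 0 * sphOmega w 0 + φ w 1 * sphOmega w 1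
      + φ w 2 * sphOmega w 2) LF z :=
    (((hp 0).mul (ho 0)).add ((hp 1).mul (ho 1))).add ((hp 2).mul (ho 2))
  have hFzero : (fun w => φ w 0 * sphOmega w 0 + φ w 1 * sphOmega w 1
      + φ w 2 * sphOmega w 2) = fun _ : R2 => (0:ℝ) := by
    funext w
    exact horth w
  rw [hFzero] at hFz
  have hLF0 : LF = 0 := hFz.unique (hasFDerivAt_const (0:ℝ) z)
  have epdx : fderiv ℝ φ z (1, 0) = pdx φ z := rfl
  have epdy : fderiv ℝ φ z (0, 1) = pdy φ z := rfl
  have hCx : φ z 0 * (Lom (1,0) 0) + sphOmega z 0 * (pdx φ z 0)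
      + (φ z 1 * (Lom (1,0) 1) + sphOmega z 1 * (pdx φ z 1))
      + (φ z 2 * (Lom (1,0) 2) + sphOmega z 2 * (pdx φ z 2)) = 0 := by
    have h := ContinuousLinearMap.ext_iff.mp hLF0 (1,0)
    simp only [hLF, ContinuousLinearMap.add_apply, ContinuousLinearMap.smul_apply,
      ContinuousLinearMap.coe_comp', Function.comp_apply, ContinuousLinearMap.proj_apply,
      ContinuousLinearMap.zero_apply, smul_eq_mul, epdx] at h
    linarith
  have hCy : φ z 0 * (Lom (0,1) 0) + sphOmega z 0 * (pdy φ z 0)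
      + (φ z 1 * (Lom (0,1) 1) + sphOmega z 1 * (pdy φ z 1))
      + (φ z 2 * (Lom (0,1) 2) + sphOmega z 2 * (pdy φ z 2)) = 0 := by
    have h := ContinuousLinearMap.ext_iff.mp hLF0 (0,1)
    simp only [hLF, ContinuousLinearMap.add_apply, ContinuousLinearMap.smul_apply,
      ContinuousLinearMap.coe_comp', Function.comp_apply, ContinuousLinearMap.proj_apply,
      ContinuousLinearMap.zero_apply, smul_eq_mul, epdy] at h
    linarith
  have hLomx : Lom (1,0) = pdx sphOmega z := by rw [pdx, hfd]
  have hLomy : Lom (0,1) = pdy sphOmega z := by rw [pdy, hfd]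
  rw [hLomx, hox] at hCx
  rw [hLomy, hoy] at hCy
  simp only [sphOmega, Matrix.cons_val_zero, Matrix.cons_val_one, Matrix.head_cons,
    Matrix.cons_val_two, Matrix.tail_cons] at hCx hCy
  have hC0 : φ z 0 * (mu z * z.1) + φ z 1 * (mu z * z.2) + φ z 2 * (1 - mu z) = 0 := by
    have h := horth z
    simp only [dot3, sphOmega, Matrix.cons_val_zero, Matrix.cons_val_one, Matrix.head_cons,
      Matrix.cons_val_two, Matrix.tail_cons] at h
    linarith
  have hmD : mu z * (1 + z.1 ^ 2 + z.2 ^ 2) = 2 := by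
    rw [mu]
    field_simp
  -- final algebraic identity
  rw [hox, hoy]
  funext l
  fin_cases l <;>
    simp only [cross3, dot3, sphOmega, Pi.add_apply, Pi.sub_apply, Pi.smul_apply, smul_eq_mul,
      Fin.zero_eta, Fin.mk_one, Fin.isValue, Fin.reduceFinMk, Matrix.cons_val_zero, Matrix.cons_val_one,
      Matrix.head_cons, Matrix.cons_val_two, Matrix.tail_cons, neg_mul]
  · linear_combination (mu z - z.1 ^ 2 * mu z ^ 2) * hCx + (-(z.1 * z.2 * mu z ^ 2)) * hCy + (mu z ^ 2 * (mu z * z.1)) * hC0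
      + (mu z * pdx φ z 2 + z.1 * mu z ^ 3 * φ z 2 - z.1 * z.2 * mu z ^ 3 * φ z 1 - z.1 ^ 2 * mu z ^ 3 * φ z 0) * hmD
  · linear_combination (-(z.1 * z.2 * mu z ^ 2)) * hCx + (mu z - z.2 ^ 2 * mu z ^ 2) * hCy + (mu z ^ 2 * (mu z * z.2)) * hC0
      + (mu z * pdy φ z 2 + z.2 * mu z ^ 3 * φ z 2 - z.2 ^ 2 * mu z ^ 3 * φ z 1 - z.1 * z.2 * mu z ^ 3 * φ z 0) * hmD
  · linear_combination (z.1 * mu z ^ 2) * hCx + (z.2 * mu z ^ 2) * hCy + (mu z ^ 2 * (1 - mu z)) * hC0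
      + (-(mu z * pdy φ z 1) - mu z * pdx φ z 0 - mu z ^ 3 * φ z 2 + z.2 * mu z ^ 3 * φ z 1 + z.1 * mu z ^ 3 * φ z 0) * hmD
end

section
/- Let K be a continuous real-valued function on the upper half-space ℝ³₊ = {p ∈ ℝ³ : p₃>0}, and let u ∈ C²(ℝ̄²,ℝ³) with u₃ > 0 everywhere solve, at every point of ℝ², the system Δu − (2/u₃)·G(∇u) = (2/u₃)·K(u)·∂ₓu∧∂_yu. Then u is conformal: |∂ₓu|² = |∂_yu|² and ∂ₓu·∂_yu = 0 at every point of ℝ². -/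
open MeasureTheory Real Filter Topology

/-- `G(∇u) ∈ ℝ³` with components `G_ℓ(∇u) = ∇u₃·∇u_ℓ − ½|∇u|²δ_{ℓ3}`. -/
noncomputable def Gvec (u : R2 → V3) (z : R2) : V3 := fun l =>
  gdot (fun w => u w 2) (fun w => u w l) z - (1 / 2) * gradNormSq u z * e3 l

set_option maxHeartbeats 2000000

noncomputable section

namespace S13
set_option maxHeartbeats 2000000

def Ff (u : R2 → V3) (w : R2) : ℂ :=
  ((((u w 2) ^ 2)⁻¹ * (dot3 (pdx u w) (pdx u w) - dot3 (pdy u w) (pdy u w)) : ℝ) : ℂ)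
    - ((((u w 2) ^ 2)⁻¹ * (2 * dot3 (pdx u w) (pdy u w)) : ℝ) : ℂ) * Complex.I

lemma CRkey (u : R2 → V3) (hu : ContDiff ℝ 2 u) (hupos : ∀ z : R2, 0 < u z 2)
    (K : V3 → ℝ)
    (hpde : ∀ z : R2, lapv u z - (2 / u z 2) • Gvec u z
      = (2 * K (u z) / u z 2) • cross3 (pdx u z) (pdy u z)) (z : R2) :
    ∃ L : R2 →L[ℝ] ℂ, HasFDerivAt (Ff u) L z ∧ L (0, 1) = Complex.I * L (1, 0) := by
  have hud : ∀ w : R2, HasFDerivAt u (fderiv ℝ u w) w :=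
    fun w => (hu.differentiable (by norm_num) w).hasFDerivAt
  have hD1 : ContDiff ℝ 1 (fderiv ℝ u) := hu.fderiv_right (by norm_num)
  have hB : HasFDerivAt (fderiv ℝ u) (fderiv ℝ (fderiv ℝ u) z) z :=
    (hD1.differentiable one_ne_zero z).hasFDerivAt
  set B := fderiv ℝ (fderiv ℝ u) z with hBdef
  have hsym : ∀ v w : R2, B v w = B w v := second_derivative_symmetric hud hB
  have hvec : ∀ q : R2, HasFDerivAt (fun w => fderiv ℝ u w q) (B.flip q) z := by
    intro q
    have h := hB.clm_apply (hasFDerivAt_const q z)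
    simpa using h
  have hpx : ∀ j : Fin 3, HasFDerivAt (fun w => fderiv ℝ u w (1, 0) j)
      ((ContinuousLinearMap.proj j).comp (B.flip (1, 0))) z :=
    fun j => by exact (ContinuousLinearMap.proj (R := ℝ) (φ := fun _ : Fin 3 => ℝ) j).hasFDerivAt.comp z (hvec (1, 0))
  have hpy : ∀ j : Fin 3, HasFDerivAt (fun w => fderiv ℝ u w (0, 1) j)
      ((ContinuousLinearMap.proj j).comp (B.flip (0, 1))) z :=
    fun j => by exact (ContinuousLinearMap.proj (R := ℝ) (φ := fun _ : Fin 3 => ℝ) j).hasFDerivAt.comp z (hvec (0, 1))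
  have hw2 : HasFDerivAt (fun w => u w 2)
      ((ContinuousLinearMap.proj (2 : Fin 3)).comp (fderiv ℝ u z)) z :=
    by exact (ContinuousLinearMap.proj (R := ℝ) (φ := fun _ : Fin 3 => ℝ) (2 : Fin 3)).hasFDerivAt.comp z (hud z)
  have hWne : u z 2 ≠ 0 := (hupos z).ne'
  have hg := (hasDerivAt_pow 2 (u z 2)).inv (pow_ne_zero 2 hWne)
  have hinv := hg.comp_hasFDerivAt z hw2
  have hPx := (((hpx 0).mul (hpx 0)).add ((hpx 1).mul (hpx 1))).add ((hpx 2).mul (hpx 2))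
  have hPy := (((hpy 0).mul (hpy 0)).add ((hpy 1).mul (hpy 1))).add ((hpy 2).mul (hpy 2))
  have hPall := hPx.sub hPy
  have hQ := ((((hpx 0).mul (hpy 0)).add ((hpx 1).mul (hpy 1))).add
      ((hpx 2).mul (hpy 2))).const_mul (2 : ℝ)
  have hre := hinv.mul hPall
  have him := hinv.mul hQ
  have h1 := Complex.ofRealCLM.hasFDerivAt.comp z hre
  have h2 := (Complex.ofRealCLM.hasFDerivAt.comp z him).mul_const Complex.I
  have hF := h1.sub h2
  have hpdxu : pdx u = fun w => fderiv ℝ u w (1, 0) := rfl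
  have hpdyu : pdy u = fun w => fderiv ℝ u w (0, 1) := rfl
  have hfd : ∀ q : R2, fderiv ℝ (fun w => fderiv ℝ u w q) z = B.flip q :=
    fun q => (hvec q).fderiv
  have hcomp : ∀ j : Fin 3, fderiv ℝ (fun w => u w j) z
      = (ContinuousLinearMap.proj j).comp (fderiv ℝ u z) :=
    fun j => HasFDerivAt.fderiv (by
      exact (ContinuousLinearMap.proj (R := ℝ) (φ := fun _ : Fin 3 => ℝ) j).hasFDerivAt.comp z (hud z))
  have E0 := congrFun (hpde z) 0
  have E1 := congrFun (hpde z) 1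
  have E2 := congrFun (hpde z) 2
  simp only [lapv, Gvec, gdot, gradNormSq, e3, cross3, Fin.sum_univ_three, pdx, pdy,
    hpdxu, hpdyu, hfd, hcomp, Pi.add_apply, Pi.sub_apply, Pi.smul_apply, smul_eq_mul,
    ContinuousLinearMap.coe_comp', Function.comp_apply, ContinuousLinearMap.add_apply,
    ContinuousLinearMap.comp_apply, ContinuousLinearMap.flip_apply,
    ContinuousLinearMap.proj_apply, Matrix.cons_val_zero, Matrix.cons_val_one,
    Matrix.head_cons, Matrix.cons_val_two, Matrix.tail_cons,
    mul_zero, mul_one, sub_zero] at E0 E1 E2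
  refine ⟨_, hF, ?_⟩
  simp only [ContinuousLinearMap.coe_comp', Function.comp_apply, ContinuousLinearMap.add_apply,
    ContinuousLinearMap.coe_sub', Pi.sub_apply, ContinuousLinearMap.smul_apply,
    ContinuousLinearMap.comp_apply, ContinuousLinearMap.flip_apply,
    ContinuousLinearMap.proj_apply, smul_eq_mul, Complex.ofRealCLM_apply,
    Pi.mul_apply, Pi.add_apply, Pi.inv_apply]
  rw [hsym (0, 1) (1, 0)]
  rw [Complex.ext_iff]
  have hD : -(((2:ℕ):ℝ) * u z 2 ^ (2 - 1)) / (u z 2 ^ 2) ^ 2 = -2 * ((u z 2)⁻¹) ^ 3 := by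
    field_simp
    ring
  rw [hD]
  simp only [← inv_pow]
  have S0 : B (1, 0) (1, 0) 0 + B (0, 1) (0, 1) 0
      = 2 * (u z 2)⁻¹ * (fderiv ℝ u z (1, 0) 2 * fderiv ℝ u z (1, 0) 0 + fderiv ℝ u z (0, 1) 2 * fderiv ℝ u z (0, 1) 0) + 2 * K (u z) * (u z 2)⁻¹ * (fderiv ℝ u z (1, 0) 1 * fderiv ℝ u z (0, 1) 2 - fderiv ℝ u z (1, 0) 2 * fderiv ℝ u z (0, 1) 1) := by
    rw [div_eq_mul_inv, div_eq_mul_inv] at E0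
    linear_combination E0
  have S1 : B (1, 0) (1, 0) 1 + B (0, 1) (0, 1) 1
      = 2 * (u z 2)⁻¹ * (fderiv ℝ u z (1, 0) 2 * fderiv ℝ u z (1, 0) 1 + fderiv ℝ u z (0, 1) 2 * fderiv ℝ u z (0, 1) 1) + 2 * K (u z) * (u z 2)⁻¹ * (fderiv ℝ u z (1, 0) 2 * fderiv ℝ u z (0, 1) 0 - fderiv ℝ u z (1, 0) 0 * fderiv ℝ u z (0, 1) 2) := by
    rw [div_eq_mul_inv, div_eq_mul_inv] at E1
    linear_combination E1
  have S2 : B (1, 0) (1, 0) 2 + B (0, 1) (0, 1) 2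
      = 2 * (u z 2)⁻¹ * (fderiv ℝ u z (1, 0) 2 * fderiv ℝ u z (1, 0) 2 + fderiv ℝ u z (0, 1) 2 * fderiv ℝ u z (0, 1) 2 - 1 / 2 * (fderiv ℝ u z (1, 0) 0 ^ 2 + fderiv ℝ u z (0, 1) 0 ^ 2 + (fderiv ℝ u z (1, 0) 1 ^ 2 + fderiv ℝ u z (0, 1) 1 ^ 2) + (fderiv ℝ u z (1, 0) 2 ^ 2 + fderiv ℝ u z (0, 1) 2 ^ 2))) + 2 * K (u z) * (u z 2)⁻¹ * (fderiv ℝ u z (1, 0) 0 * fderiv ℝ u z (0, 1) 1 - fderiv ℝ u z (1, 0) 1 * fderiv ℝ u z (0, 1) 0) := by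
    rw [div_eq_mul_inv, div_eq_mul_inv] at E2
    linear_combination E2
  constructor
  · simp only [Complex.sub_re, Complex.sub_im, Complex.mul_re, Complex.mul_im,
      Complex.I_re, Complex.I_im, Complex.ofReal_re, Complex.ofReal_im,
      mul_zero, zero_mul, mul_one, one_mul, zero_sub, sub_zero, neg_neg, neg_zero,
      add_zero, zero_add, pow_one]
    linear_combination (-2 * (u z 2)⁻¹ ^ 2 * fderiv ℝ u z (0, 1) 0) * S0 + (-2 * (u z 2)⁻¹ ^ 2 * fderiv ℝ u z (0, 1) 1) * S1 + (-2 * (u z 2)⁻¹ ^ 2 * fderiv ℝ u z (0, 1) 2) * S2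
  · simp only [Complex.sub_re, Complex.sub_im, Complex.mul_re, Complex.mul_im,
      Complex.I_re, Complex.I_im, Complex.ofReal_re, Complex.ofReal_im,
      mul_zero, zero_mul, mul_one, one_mul, zero_sub, sub_zero, neg_neg, neg_zero,
      add_zero, zero_add, pow_one]
    linear_combination (-2 * (u z 2)⁻¹ ^ 2 * fderiv ℝ u z (1, 0) 0) * S0 + (-2 * (u z 2)⁻¹ ^ 2 * fderiv ℝ u z (1, 0) 1) * S1 + (-2 * (u z 2)⁻¹ ^ 2 * fderiv ℝ u z (1, 0) 2) * S2


lemma cdiff {f : ℂ → ℂ} {m : ℂ →L[ℝ] ℂ} {ζ : ℂ} (h : HasFDerivAt f m ζ)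
    (hcr : m Complex.I = Complex.I * m 1) : DifferentiableAt ℂ f ζ := by
  have hm : ∀ x : ℂ, m x = x * m 1 := by
    intro x
    have hx : x = x.re • (1 : ℂ) + x.im • Complex.I := by
      simp [Complex.real_smul, Complex.re_add_im x]
    rw [hx, map_add, _root_.map_smul, _root_.map_smul, hcr]
    push_cast [Complex.real_smul]
    ring
  have h2 : HasFDerivAt f (ContinuousLinearMap.restrictScalars ℝ
      ((1 : ℂ →L[ℂ] ℂ).smulRight (m 1))) ζ := by
    convert h using 1
    ext x
    simp [hm x, mul_comm]
  have h3 : HasFDerivAt f ((1 : ℂ →L[ℂ] ℂ).smulRight (m 1)) ζ := by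
    rwa [hasFDerivAt_iff_isLittleO_nhds_zero] at h2 ⊢
  exact h3.differentiableAt

lemma entire (u : R2 → V3) (hu : ContDiff ℝ 2 u) (hupos : ∀ z : R2, 0 < u z 2)
    (K : V3 → ℝ)
    (hpde : ∀ z : R2, lapv u z - (2 / u z 2) • Gvec u z
      = (2 * K (u z) / u z 2) • cross3 (pdx u z) (pdy u z)) :
    Differentiable ℂ (fun ζ : ℂ => Ff u (Complex.equivRealProdCLM ζ)) := by
  intro ζ
  obtain ⟨L, hL, hcr⟩ := CRkey u hu hupos K hpde (Complex.equivRealProdCLM ζ)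
  have h := hL.comp ζ Complex.equivRealProdCLM.hasFDerivAt
  apply cdiff h
  have heI : (Complex.equivRealProdCLM Complex.I : R2) = (0, 1) := by
    simp [Complex.equivRealProdCLM_apply]
  have he1 : (Complex.equivRealProdCLM (1 : ℂ) : R2) = (1, 0) := by
    simp [Complex.equivRealProdCLM_apply]
  simpa [ContinuousLinearMap.comp_apply, ContinuousLinearEquiv.coe_coe, heI, he1] using hcr

lemma einv_eq (ξ : ℂ) : invz (Complex.equivRealProdCLM ξ) = Complex.equivRealProdCLM ξ⁻¹ := by
  rw [Prod.ext_iff]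
  constructor <;>
  · simp [invz, Complex.equivRealProdCLM_apply, Complex.inv_re, Complex.inv_im,
      Complex.normSq_apply, Complex.div_re, Complex.div_im]
    ring_nf

lemma invol (z : R2) : invz (invz z) = z := by
  conv_lhs => rw [← Complex.equivRealProdCLM.apply_symm_apply z]
  rw [einv_eq, einv_eq, inv_inv, Complex.equivRealProdCLM.apply_symm_apply]

lemma invz_ne (z : R2) (hz : z ≠ 0) : invz z ≠ 0 := by
  intro h
  apply hz
  have := congrArg invz h
  rw [invol] at this
  rw [this]
  simp [invz]


lemma transform (u v : R2 → V3) (hv : ContDiff ℝ 2 v)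
    (hv2 : ∀ z : R2, z ≠ 0 → v z = u (invz z)) (ζ : ℂ) (hζ : ζ ≠ 0) :
    Ff u (Complex.equivRealProdCLM ζ)
      = (-(ζ ^ 2)⁻¹) ^ 2 * Ff v (Complex.equivRealProdCLM ζ⁻¹) := by
  set e := Complex.equivRealProdCLM with he
  set z₀ : R2 := e ζ with hz₀def
  set w : R2 := e ζ⁻¹ with hwdef
  set c : ℂ := -(ζ ^ 2)⁻¹ with hcdef
  have hz₀ne : z₀ ≠ 0 := fun h => hζ (by simpa using (e.map_eq_zero_iff).mp h)
  have hinvz0 : invz z₀ = w := einv_eq ζ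
  have hueq : ∀ z : R2, z ≠ 0 → u z = v (invz z) := by
    intro z hz
    rw [hv2 (invz z) (invz_ne z hz), invol z]
  -- derivative of invz at z₀
  have hdi : HasDerivAt (fun ξ : ℂ => ξ⁻¹) c ζ := hasDerivAt_inv hζ
  have hdiF := (hdi.hasFDerivAt).restrictScalars ℝ
  have hsy : e.symm z₀ = ζ := by simp [hz₀def]
  rw [← hsy] at hdiF
  have h4 := hdiF.comp z₀ e.symm.hasFDerivAt
  have h5 := (e.hasFDerivAt (x := (e.symm z₀)⁻¹)).comp z₀ h4
  have hfun : invz = ⇑e ∘ (fun ξ : ℂ => ξ⁻¹) ∘ ⇑e.symm := by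
    funext z
    simp only [Function.comp_apply]
    conv_lhs => rw [← e.apply_symm_apply z]
    exact einv_eq (e.symm z)
  set M := ((e : ℂ →L[ℝ] R2).comp
      ((ContinuousLinearMap.restrictScalars ℝ ((1 : ℂ →L[ℂ] ℂ).smulRight c)).comp
        (e.symm : R2 →L[ℝ] ℂ))) with hM
  have hMz : HasFDerivAt invz M z₀ := by
    rw [hfun, hM]
    exact h5
  have hvw : HasFDerivAt v (fderiv ℝ v (invz z₀)) (invz z₀) := by
    exact (hv.differentiable two_ne_zero (invz z₀)).hasFDerivAt
  have h6 := hvw.comp z₀ hMz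
  have hev : u =ᶠ[nhds z₀] (v ∘ invz) := by
    filter_upwards [isOpen_compl_singleton.mem_nhds
      (by simpa using hz₀ne : z₀ ∈ ({(0 : R2)}ᶜ : Set R2))] with z hz
    exact hueq z (by simpa using hz)
  have hufd : HasFDerivAt u ((fderiv ℝ v (invz z₀)).comp M) z₀ :=
    h6.congr_of_eventuallyEq hev
  have hDu : fderiv ℝ u z₀ = (fderiv ℝ v (invz z₀)).comp M := hufd.fderiv
  have hesym1 : e.symm ((1 : ℝ), (0 : ℝ)) = 1 := by
    rw [he, Complex.equivRealProdCLM_symm_apply]; simp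
  have hesymI : e.symm ((0 : ℝ), (1 : ℝ)) = Complex.I := by
    rw [he, Complex.equivRealProdCLM_symm_apply]; simp
  have hM10 : M ((1 : ℝ), (0 : ℝ)) = (c.re, c.im) := by
    simp only [hM, ContinuousLinearMap.comp_apply, ContinuousLinearEquiv.coe_coe,
      ContinuousLinearMap.coe_restrictScalars', hesym1,
      ContinuousLinearMap.smulRight_apply, ContinuousLinearMap.one_apply]
    rw [he]
    simp [Complex.equivRealProdCLM_apply]
  have hM01 : M ((0 : ℝ), (1 : ℝ)) = (-c.im, c.re) := by
    simp only [hM, ContinuousLinearMap.comp_apply, ContinuousLinearEquiv.coe_coe,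
      ContinuousLinearMap.coe_restrictScalars', hesymI,
      ContinuousLinearMap.smulRight_apply, ContinuousLinearMap.one_apply]
    rw [he]
    simp [Complex.equivRealProdCLM_apply, Complex.mul_re, Complex.mul_im]
  have hux : fderiv ℝ u z₀ ((1 : ℝ), (0 : ℝ))
      = c.re • fderiv ℝ v w ((1 : ℝ), (0 : ℝ)) + c.im • fderiv ℝ v w ((0 : ℝ), (1 : ℝ)) := by
    rw [hDu, ContinuousLinearMap.comp_apply, hM10, hinvz0]
    have hsp : ((c.re, c.im) : R2) = c.re • ((1 : ℝ), (0 : ℝ)) + c.im • ((0 : ℝ), (1 : ℝ)) := by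
      simp [Prod.ext_iff]
    rw [hsp, map_add, _root_.map_smul, _root_.map_smul]
  have huy : fderiv ℝ u z₀ ((0 : ℝ), (1 : ℝ))
      = (-c.im) • fderiv ℝ v w ((1 : ℝ), (0 : ℝ)) + c.re • fderiv ℝ v w ((0 : ℝ), (1 : ℝ)) := by
    rw [hDu, ContinuousLinearMap.comp_apply, hM01, hinvz0]
    have hsp : ((-c.im, c.re) : R2) = (-c.im) • ((1 : ℝ), (0 : ℝ)) + c.re • ((0 : ℝ), (1 : ℝ)) := by
      simp [Prod.ext_iff]
    rw [hsp, map_add, _root_.map_smul, _root_.map_smul]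
  have hpxj : ∀ j : Fin 3, fderiv ℝ u z₀ (1, 0) j
      = c.re * fderiv ℝ v w (1, 0) j + c.im * fderiv ℝ v w (0, 1) j := by
    intro j
    rw [hux]
    simp
  have hpyj : ∀ j : Fin 3, fderiv ℝ u z₀ (0, 1) j
      = -c.im * fderiv ℝ v w (1, 0) j + c.re * fderiv ℝ v w (0, 1) j := by
    intro j
    rw [huy]
    simp
  have hu2 : u z₀ = v w := by rw [hueq z₀ hz₀ne, hinvz0]
  show Ff u z₀ = c ^ 2 * Ff v w
  have hc2 : c ^ 2 = (↑(c.re * c.re - c.im * c.im) : ℂ) + ↑(2 * c.re * c.im) * Complex.I := by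
    rw [pow_two]
    apply Complex.ext <;>
      simp [Complex.mul_re, Complex.mul_im, Complex.add_re, Complex.add_im] <;> ring
  simp only [Ff, dot3, pdx, pdy, hpxj, hpyj, congrFun hu2 2, hc2]
  rw [Complex.ext_iff]
  constructor <;>
  · simp only [Complex.sub_re, Complex.sub_im, Complex.add_re, Complex.add_im, Complex.mul_re,
      Complex.mul_im, Complex.I_re, Complex.I_im, Complex.ofReal_re, Complex.ofReal_im,
      mul_zero, zero_mul, mul_one, one_mul, zero_sub, sub_zero, neg_zero, add_zero, zero_add]
    ring


lemma enorm (ξ : ℂ) : ‖(Complex.equivRealProdCLM ξ : R2)‖ ≤ ‖ξ‖ := by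
  rw [Prod.norm_def]
  simp only [Complex.equivRealProdCLM_apply]
  apply max_le
  · simpa [Real.norm_eq_abs] using Complex.abs_re_le_norm ξ
  · simpa [Real.norm_eq_abs] using Complex.abs_im_le_norm ξ

lemma Ffcont (v : R2 → V3) (hv : ContDiff ℝ 2 v) (hne : v 0 2 ≠ 0) :
    ContinuousAt (Ff v) 0 := by
  have hD : Continuous (fderiv ℝ v) := (hv.fderiv_right (m := 1) (by norm_num)).continuous
  have hq : ∀ (q : R2) (j : Fin 3), Continuous fun z : R2 => fderiv ℝ v z q j := by
    intro q j
    exact (continuous_apply j).comp ((ContinuousLinearMap.apply ℝ V3 q).continuous.comp hD)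
  have hv2 : Continuous fun z : R2 => v z 2 := (continuous_apply (2 : Fin 3)).comp hv.continuous
  have hinv : ContinuousAt (fun z : R2 => ((v z 2) ^ 2)⁻¹) 0 :=
    ((hv2.pow 2).continuousAt).inv₀ (pow_ne_zero 2 hne)
  have hP : Continuous fun z : R2 => dot3 (pdx v z) (pdx v z) - dot3 (pdy v z) (pdy v z) := by
    unfold dot3 pdx pdy
    exact (((((hq (1,0) 0).mul (hq (1,0) 0)).add ((hq (1,0) 1).mul (hq (1,0) 1))).add
      ((hq (1,0) 2).mul (hq (1,0) 2))).sub ((((hq (0,1) 0).mul (hq (0,1) 0)).add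
      ((hq (0,1) 1).mul (hq (0,1) 1))).add ((hq (0,1) 2).mul (hq (0,1) 2))))
  have hQ : Continuous fun z : R2 => 2 * dot3 (pdx v z) (pdy v z) := by
    unfold dot3 pdx pdy
    exact (continuous_const.mul ((((hq (1,0) 0).mul (hq (0,1) 0)).add
      ((hq (1,0) 1).mul (hq (0,1) 1))).add ((hq (1,0) 2).mul (hq (0,1) 2))))
  unfold Ff
  exact ((Complex.continuous_ofReal.continuousAt.comp (hinv.mul hP.continuousAt)).sub
    ((Complex.continuous_ofReal.continuousAt.comp (hinv.mul hQ.continuousAt)).mul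
      continuousAt_const))


lemma Ffzero (u : R2 → V3) (hu : ContDiff ℝ 2 u) (hupos : ∀ z : R2, 0 < u z 2)
    (K : V3 → ℝ)
    (hext : ∃ v : R2 → V3, ContDiff ℝ 2 v ∧ (∀ z : R2, z ≠ 0 → v z = u (invz z)) ∧
      0 < v 0 2)
    (hpde : ∀ z : R2, lapv u z - (2 / u z 2) • Gvec u z
      = (2 * K (u z) / u z 2) • cross3 (pdx u z) (pdy u z)) :
    ∀ z : R2, Ff u z = 0 := by
  obtain ⟨v, hv, hvu, hv0⟩ := hext
  set e := Complex.equivRealProdCLM with he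
  have hdiff : Differentiable ℂ (fun ζ : ℂ => Ff u (e ζ)) := entire u hu hupos K hpde
  have hcont : ContinuousAt (Ff v) 0 := Ffcont v hv hv0.ne'
  obtain ⟨δ, hδpos, hδ⟩ := Metric.continuousAt_iff.mp hcont 1 one_pos
  set C : ℝ := ‖Ff v 0‖ + 1 with hCdef
  have hCpos : 0 < C := by positivity
  have hCb : ∀ w : R2, dist w 0 < δ → ‖Ff v w‖ ≤ C := by
    intro w hw
    have h2 := hδ hw
    rw [dist_eq_norm] at h2
    calc ‖Ff v w‖ = ‖Ff v 0 + (Ff v w - Ff v 0)‖ := by ring_nf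
      _ ≤ ‖Ff v 0‖ + ‖Ff v w - Ff v 0‖ := norm_add_le _ _
      _ ≤ C := by rw [hCdef]; linarith
  set R : ℝ := max 1 (2 / δ) with hRdef
  have hR1 : (1:ℝ) ≤ R := le_max_left _ _
  -- quantitative decay
  have hdecay : ∀ ζ : ℂ, R < ‖ζ‖ → ‖Ff u (e ζ)‖ ≤ ((‖ζ‖ ^ 2)⁻¹) ^ 2 * C := by
    intro ζ hζR
    have h1 : (1:ℝ) < ‖ζ‖ := lt_of_le_of_lt hR1 hζR
    have hζne : ζ ≠ 0 := by
      intro h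
      rw [h, norm_zero] at h1
      linarith
    rw [he] at *
    rw [transform u v hv hvu ζ hζne, norm_mul]
    have hwsmall : dist (Complex.equivRealProdCLM ζ⁻¹) 0 < δ := by
      rw [dist_zero_right]
      have hle := enorm ζ⁻¹
      have h2d : 2 / δ < ‖ζ‖ := lt_of_le_of_lt (le_max_right 1 (2/δ)) hζR
      have hz0 : (0:ℝ) < ‖ζ‖ := by linarith
      have : ‖ζ⁻¹‖ < δ := by
        rw [norm_inv]
        have hδ2 : 0 < 2 / δ := by positivity
        have := (inv_lt_inv₀ hz0 hδ2).mpr h2d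
        rw [inv_div] at this
        calc ‖ζ‖⁻¹ < δ / 2 := this
          _ < δ := by linarith
      linarith
    have hnc : ‖(-(ζ ^ 2)⁻¹) ^ 2‖ = ((‖ζ‖ ^ 2)⁻¹) ^ 2 := by
      rw [norm_pow, norm_neg, norm_inv, norm_pow]
    rw [hnc]
    have := hCb _ hwsmall
    have hnn : (0:ℝ) ≤ ((‖ζ‖ ^ 2)⁻¹) ^ 2 := by positivity
    exact mul_le_mul_of_nonneg_left this hnn
  obtain ⟨Bb, hBb⟩ := (isCompact_closedBall (0:ℂ) (R+1)).exists_bound_of_continuousOn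
      (hdiff.continuous.continuousOn)
  have hglob : ∀ ζ : ℂ, ‖Ff u (e ζ)‖ ≤ max C Bb := by
    intro ζ
    rcases le_or_gt ‖ζ‖ (R+1) with h | h
    · exact le_max_of_le_right (hBb ζ (by simpa [Metric.mem_closedBall, dist_zero_right] using h))
    · refine le_max_of_le_left ?_
      have hd := hdecay ζ (by linarith)
      have h1 : (1:ℝ) ≤ ‖ζ‖ := by linarith
      have : ((‖ζ‖ ^ 2)⁻¹) ^ 2 ≤ 1 := by
        have h2 : (1:ℝ) ≤ ‖ζ‖ ^ 2 := by nlinarith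
        have h3 : (‖ζ‖ ^ 2)⁻¹ ≤ 1 := by
          rw [inv_le_one_iff₀]
          right; exact h2
        have h4 : (0:ℝ) ≤ (‖ζ‖ ^ 2)⁻¹ := by positivity
        nlinarith
      calc ‖Ff u (e ζ)‖ ≤ ((‖ζ‖ ^ 2)⁻¹) ^ 2 * C := hd
        _ ≤ 1 * C := mul_le_mul_of_nonneg_right this hCpos.le
        _ = C := one_mul C
  have hbdd : Bornology.IsBounded (Set.range fun ζ : ℂ => Ff u (e ζ)) := by
    rw [isBounded_iff_forall_norm_le]
    refine ⟨max C Bb, ?_⟩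
    rintro x ⟨ζ, rfl⟩
    exact hglob ζ
  have hconst := hdiff.apply_eq_apply_of_bounded hbdd
  have hzero : ∀ ζ : ℂ, Ff u (e ζ) = 0 := by
    intro ζ
    have hle : ∀ n : ℕ, ‖Ff u (e ζ)‖ ≤ C * ((n:ℝ) + 1)⁻¹ := by
      intro n
      set t : ℝ := ((n:ℝ) + 1) * (R + 1) with htdef
      have hn1 : (1:ℝ) ≤ (n:ℝ) + 1 := by
        have : (0:ℝ) ≤ (n:ℝ) := Nat.cast_nonneg n
        linarith
      have htR : R < t := by nlinarith
      have hnt : ‖(t:ℂ)‖ = t := by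
        rw [Complex.norm_real, Real.norm_eq_abs, abs_of_pos (by nlinarith)]
      have hd := hdecay (t:ℂ) (by rw [hnt]; exact htR)
      rw [hconst ζ (t:ℂ), hnt] at *
      calc ‖Ff u (e (t:ℂ))‖ ≤ ((t ^ 2)⁻¹) ^ 2 * C := hd
        _ ≤ ((n:ℝ) + 1)⁻¹ * C := by
            have ht1 : (1:ℝ) ≤ t := by nlinarith
            have htn : (n:ℝ) + 1 ≤ t := by nlinarith
            have ha : t ≤ t ^ 2 := by nlinarith
            have hb : t ^ 2 ≤ (t ^ 2) ^ 2 := by nlinarith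
            have h4 : (n:ℝ) + 1 ≤ (t ^ 2) ^ 2 := by linarith
            have h5 : ((t ^ 2) ^ 2)⁻¹ ≤ ((n:ℝ) + 1)⁻¹ := by
              apply inv_anti₀ (by linarith) h4
            have h6 : ((t ^ 2)⁻¹) ^ 2 = ((t ^ 2) ^ 2)⁻¹ := by
              rw [inv_pow]
            rw [h6]
            exact mul_le_mul_of_nonneg_right h5 hCpos.le
        _ = C * ((n:ℝ) + 1)⁻¹ := mul_comm _ _
    have htend : Filter.Tendsto (fun n : ℕ => C * ((n:ℝ) + 1)⁻¹) atTop (nhds 0) := by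
      have h := tendsto_one_div_add_atTop_nhds_zero_nat (𝕜 := ℝ)
      have h2 := h.const_mul C
      simpa [one_div, mul_zero] using h2
    have hle0 : ‖Ff u (e ζ)‖ ≤ 0 := ge_of_tendsto' htend hle
    simpa using le_antisymm hle0 (norm_nonneg _)
  intro z
  have := hzero (e.symm z)
  rwa [e.apply_symm_apply] at this

end S13

end

/-- A `C²(ℝ̄²,ℍ³)` solution of the `K`-bubble system
`Δu − (2/u₃)G(∇u) = (2/u₃)K(u) ∂ₓu∧∂_yu` is conformal. -/
theorem statement13 (K : V3 → ℝ) (hK : ContinuousOn K {p : V3 | 0 < p 2})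
    (u : R2 → V3) (hu : ContDiff ℝ 2 u) (hupos : ∀ z : R2, 0 < u z 2)
    (hext : ∃ v : R2 → V3, ContDiff ℝ 2 v ∧ (∀ z : R2, z ≠ 0 → v z = u (invz z)) ∧
      0 < v 0 2)
    (hpde : ∀ z : R2,
      lapv u z - (2 / u z 2) • Gvec u z
        = (2 * K (u z) / u z 2) • cross3 (pdx u z) (pdy u z)) :
    ∀ z : R2, dot3 (pdx u z) (pdx u z) = dot3 (pdy u z) (pdy u z) ∧
      dot3 (pdx u z) (pdy u z) = 0 := by
  intro z
  have h0 := S13.Ffzero u hu hupos K hext hpde z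
  unfold S13.Ff at h0
  have hre := congrArg Complex.re h0
  have him := congrArg Complex.im h0
  simp only [Complex.sub_re, Complex.sub_im, Complex.mul_re, Complex.mul_im, Complex.I_re,
    Complex.I_im, Complex.ofReal_re, Complex.ofReal_im, Complex.zero_re, Complex.zero_im,
    mul_zero, zero_mul, mul_one, sub_zero, zero_sub, neg_eq_zero, add_zero] at hre him
  have hWne : ((u z 2) ^ 2)⁻¹ ≠ 0 := inv_ne_zero (pow_ne_zero 2 (hupos z).ne')
  constructor
  · have h1 := (mul_eq_zero.mp hre).resolve_left hWne
    linarith [h1]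
  · have h1 := (mul_eq_zero.mp him).resolve_left hWne
    linarith [h1]
end

section
/- Let k>1. For every t > 1 one has (1/2)∫_{ℝ²} (ω₃+t)^{−2}|∇ω|² dz − k∫_{ℝ²} (ω₃+t)^{−2}·e₃·(∂ₓω∧∂_yω) dz = 4π(−(kt−1)/(t²−1) + (k/2)·log((t+1)/(t−1))). In particular this quantity tends to −∞ as t → 1⁺, so the energy functional E_hyp is unbounded from below. -/
open MeasureTheory Real Filter Topology

section aux
open Set

noncomputable section

lemma pdx_eq {f : R2 → ℝ} {z : R2} {d : ℝ} (hf : DifferentiableAt ℝ f z)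
    (h : HasDerivAt (fun x => f (x, z.2)) d z.1) : pdx f z = d := by
  have hc : HasDerivAt (fun x : ℝ => ((x, z.2) : R2)) (1, 0) z.1 :=
    (hasDerivAt_id z.1).prodMk (hasDerivAt_const _ _)
  have h2 : HasDerivAt (fun x => f (x, z.2)) (fderiv ℝ f z (1, 0)) z.1 := by
    simpa [Function.comp_def] using hf.hasFDerivAt.comp_hasDerivAt z.1 hc
  exact (h2.unique h) ▸ rfl

lemma pdy_eq {f : R2 → ℝ} {z : R2} {d : ℝ} (hf : DifferentiableAt ℝ f z)
    (h : HasDerivAt (fun y => f (z.1, y)) d z.2) : pdy f z = d := by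
  have hc : HasDerivAt (fun y : ℝ => ((z.1, y) : R2)) (0, 1) z.2 :=
    (hasDerivAt_const _ _).prodMk (hasDerivAt_id z.2)
  have h2 : HasDerivAt (fun y => f (z.1, y)) (fderiv ℝ f z (0, 1)) z.2 := by
    simpa [Function.comp_def] using hf.hasFDerivAt.comp_hasDerivAt z.2 hc
  exact (h2.unique h) ▸ rfl

lemma Dpos (x y : ℝ) : (0:ℝ) < 1 + x^2 + y^2 := by positivity

lemma hdenx (x y : ℝ) : HasDerivAt (fun x : ℝ => 1 + x^2 + y^2) (2*x) x := by
  simpa using (((hasDerivAt_pow 2 x).const_add 1).add_const (y^2))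

lemma hdeny (x y : ℝ) : HasDerivAt (fun y : ℝ => 1 + x^2 + y^2) (2*y) y := by
  have := ((hasDerivAt_pow 2 y).const_add (1 + x^2))
  simpa using this

lemma mu_diff (z : R2) : DifferentiableAt ℝ mu z := by
  have h : (1 + z.1^2 + z.2^2) ≠ 0 := (Dpos z.1 z.2).ne'
  unfold mu
  fun_prop (disch := assumption)

lemma diff0 (z : R2) : DifferentiableAt ℝ (fun w : R2 => mu w * w.1) z :=
  (mu_diff z).mul differentiableAt_fst
lemma diff1 (z : R2) : DifferentiableAt ℝ (fun w : R2 => mu w * w.2) z :=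
  (mu_diff z).mul differentiableAt_snd
lemma diff2 (z : R2) : DifferentiableAt ℝ (fun w : R2 => 1 - mu w) z :=
  (differentiableAt_const 1).sub (mu_diff z)

-- 1D derivative of x ↦ 2/(1+x^2+c)
lemma hmux (x y : ℝ) : HasDerivAt (fun x : ℝ => 2/(1 + x^2 + y^2))
    (-(2*(2*x))/(1+x^2+y^2)^2) x := by
  simpa using (hasDerivAt_const x (2:ℝ)).fun_div (hdenx x y) (Dpos x y).ne'

lemma hmuy (x y : ℝ) : HasDerivAt (fun y : ℝ => 2/(1 + x^2 + y^2))
    (-(2*(2*y))/(1+x^2+y^2)^2) y := by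
  simpa using (hasDerivAt_const y (2:ℝ)).fun_div (hdeny x y) (Dpos x y).ne'

lemma pdx0 (z : R2) : pdx (fun w => mu w * w.1) z
    = (2*(1+z.1^2+z.2^2) - 4*z.1^2)/(1+z.1^2+z.2^2)^2 := by
  apply pdx_eq (diff0 z)
  have h := (hmux z.1 z.2).fun_mul (hasDerivAt_id z.1)
  refine h.congr_deriv ?_
  symm
  simp only [id_eq]
  have := (Dpos z.1 z.2).ne'
  field_simp
  ring

lemma pdy0 (z : R2) : pdy (fun w => mu w * w.1) z
    = -(4*z.1*z.2)/(1+z.1^2+z.2^2)^2 := by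
  apply pdy_eq (diff0 z)
  have h := (hmuy z.1 z.2).fun_mul (hasDerivAt_const z.2 z.1)
  refine h.congr_deriv ?_
  symm
  have := (Dpos z.1 z.2).ne'
  field_simp
  ring

lemma pdx1 (z : R2) : pdx (fun w => mu w * w.2) z
    = -(4*z.1*z.2)/(1+z.1^2+z.2^2)^2 := by
  apply pdx_eq (diff1 z)
  have h := (hmux z.1 z.2).fun_mul (hasDerivAt_const z.1 z.2)
  refine h.congr_deriv ?_
  symm
  have := (Dpos z.1 z.2).ne'
  field_simp
  ring

lemma pdy1 (z : R2) : pdy (fun w => mu w * w.2) z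
    = (2*(1+z.1^2+z.2^2) - 4*z.2^2)/(1+z.1^2+z.2^2)^2 := by
  apply pdy_eq (diff1 z)
  have h := (hmuy z.1 z.2).fun_mul (hasDerivAt_id z.2)
  refine h.congr_deriv ?_
  symm
  simp only [id_eq]
  have := (Dpos z.1 z.2).ne'
  field_simp
  ring

lemma pdx2 (z : R2) : pdx (fun w => 1 - mu w) z = 4*z.1/(1+z.1^2+z.2^2)^2 := by
  apply pdx_eq (diff2 z)
  have h := (hmux z.1 z.2).const_sub 1
  refine h.congr_deriv ?_
  symm
  have := (Dpos z.1 z.2).ne'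
  field_simp
  ring

lemma pdy2 (z : R2) : pdy (fun w => 1 - mu w) z = 4*z.2/(1+z.1^2+z.2^2)^2 := by
  apply pdy_eq (diff2 z)
  have h := (hmuy z.1 z.2).const_sub 1
  refine h.congr_deriv ?_
  symm
  have := (Dpos z.1 z.2).ne'
  field_simp
  ring

lemma sph_diff_comp (z : R2) (j : Fin 3) :
    DifferentiableAt ℝ (fun w : R2 => sphOmega w j) z := by
  fin_cases j
  · simpa [sphOmega] using diff0 z
  · simpa [sphOmega] using diff1 z
  · simpa [sphOmega] using diff2 z

lemma pdx_sph_apply (z : R2) (j : Fin 3) :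
    pdx sphOmega z j = pdx (fun w => sphOmega w j) z := by
  unfold pdx
  rw [show sphOmega = (fun w j => sphOmega w j) from rfl, fderiv_pi (sph_diff_comp z)]
  rfl

lemma pdy_sph_apply (z : R2) (j : Fin 3) :
    pdy sphOmega z j = pdy (fun w => sphOmega w j) z := by
  unfold pdy
  rw [show sphOmega = (fun w j => sphOmega w j) from rfl, fderiv_pi (sph_diff_comp z)]
  rfl

lemma comp_eq0 : (fun w : R2 => sphOmega w 0) = fun w => mu w * w.1 := by
  funext w; simp [sphOmega]
lemma comp_eq1 : (fun w : R2 => sphOmega w 1) = fun w => mu w * w.2 := by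
  funext w; simp [sphOmega]
lemma comp_eq2 : (fun w : R2 => sphOmega w 2) = fun w => 1 - mu w := by
  funext w; simp [sphOmega]

lemma key1 (z : R2) :
    dot3 (pdx sphOmega z) (pdx sphOmega z) + dot3 (pdy sphOmega z) (pdy sphOmega z)
      = 8/(1+z.1^2+z.2^2)^2 := by
  simp only [dot3, pdx_sph_apply, pdy_sph_apply, comp_eq0, comp_eq1, comp_eq2,
    pdx0, pdx1, pdx2, pdy0, pdy1, pdy2]
  have := (Dpos z.1 z.2).ne'
  field_simp
  ring

lemma key2 (z : R2) :
    dot3 e3 (cross3 (pdx sphOmega z) (pdy sphOmega z))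
      = 4*(1 - z.1^2 - z.2^2)/(1+z.1^2+z.2^2)^3 := by
  simp only [dot3, cross3, e3, pdx_sph_apply, pdy_sph_apply, comp_eq0, comp_eq1, comp_eq2,
    pdx0, pdx1, pdx2, pdy0, pdy1, pdy2, Matrix.cons_val_zero, Matrix.cons_val_one,
    Matrix.head_cons, Matrix.cons_val_two, Matrix.tail_cons]
  have := (Dpos z.1 z.2).ne'
  field_simp
  ring

lemma radial_integral (g : ℝ → ℝ) :
    ∫ z : R2, g (z.1^2+z.2^2) = (∫ r in Ioi (0:ℝ), r * g (r^2)) * (2*π) := by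
  rw [← integral_comp_polarCoord_symm (fun z : R2 => g (z.1^2+z.2^2))]
  have heq : ∀ p : ℝ × ℝ,
      p.1 • (fun z : R2 => g (z.1^2+z.2^2)) (polarCoord.symm p)
        = (fun r => r * g (r^2)) p.1 * (fun _ : ℝ => (1:ℝ)) p.2 := by
    intro p
    have h : (p.1 * cos p.2)^2 + (p.1 * sin p.2)^2 = p.1^2 := by
      rw [mul_pow, mul_pow, ← mul_add]
      rw [cos_sq_add_sin_sq]; ring
    simp only [polarCoord_symm_apply, smul_eq_mul, mul_one]
    rw [h]
  rw [show (fun p : ℝ × ℝ => p.1 • (fun z : R2 => g (z.1^2+z.2^2)) (polarCoord.symm p))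
      = fun p : ℝ × ℝ => (fun r => r * g (r^2)) p.1 * (fun _ : ℝ => (1:ℝ)) p.2 from funext heq]
  rw [polarCoord_target, Measure.volume_eq_prod,
    setIntegral_prod_mul (fun r : ℝ => r * g (r^2)) (fun _ : ℝ => (1:ℝ)) (Ioi 0) (Ioo (-π) π)]
  congr 1
  simp only [integral_const, MeasurableSet.univ, Measure.restrict_apply, Set.univ_inter,
    Real.volume_Ioo, smul_eq_mul, mul_one]
  rw [Measure.real, Measure.restrict_apply MeasurableSet.univ, Set.univ_inter, Real.volume_Ioo,
    ENNReal.toReal_ofReal (by linarith [Real.pi_pos] : (0:ℝ) ≤ π - -π)]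
  ring


lemma apos {t : ℝ} (ht : 1 < t) : (0:ℝ) < 1 + t := by linarith
lemma bpos {t : ℝ} (ht : 1 < t) : (0:ℝ) < t - 1 := by linarith
lemma Ppos {t : ℝ} (ht : 1 < t) (r : ℝ) : (0:ℝ) < (1+t)*r^2 + (t-1) := by
  nlinarith [sq_nonneg r]

lemma H1_deriv {t : ℝ} (ht : 1 < t) (r : ℝ) :
    HasDerivAt (fun r : ℝ => -4/((1+t)*((1+t)*r^2+(t-1))))
      (r * (8/((1+t)*r^2+(t-1))^2)) r := by
  have hden : HasDerivAt (fun r : ℝ => (1+t)*((1+t)*r^2+(t-1)))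
      ((1+t)*((1+t)*(2*r))) r := by
    have h1 : HasDerivAt (fun r : ℝ => (1+t)*r^2+(t-1)) ((1+t)*(2*r)) r := by
      simpa using (((hasDerivAt_pow 2 r).const_mul (1+t)).add_const (t-1))
    simpa using h1.const_mul (1+t)
  have hne : (1+t)*((1+t)*r^2+(t-1)) ≠ 0 := by
    have := Ppos ht r; have := apos ht; positivity
  have h := (hasDerivAt_const r (-4 : ℝ)).fun_div hden hne
  refine h.congr_deriv ?_
  symm
  have h2 := (Ppos ht r).ne'
  have h3 := (apos ht).ne'
  field_simp
  ring

lemma H1_tendsto {t : ℝ} (ht : 1 < t) :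
    Tendsto (fun r : ℝ => -4/((1+t)*((1+t)*r^2+(t-1)))) atTop (𝓝 0) := by
  apply Tendsto.div_atTop (tendsto_const_nhds)
  apply Tendsto.const_mul_atTop (apos ht)
  apply tendsto_atTop_add_const_right
  exact (tendsto_pow_atTop (two_ne_zero)).const_mul_atTop (apos ht)

lemma J1_nonneg {t : ℝ} (ht : 1 < t) (r : ℝ) (hr : r ∈ Ioi (0:ℝ)) :
    0 ≤ r * (8/((1+t)*r^2+(t-1))^2) := by
  have h1 := Ppos ht r
  have h2 : (0:ℝ) < r := hr
  positivity

lemma J1_val {t : ℝ} (ht : 1 < t) : ∫ r in Ioi (0:ℝ), r * (8/((1+t)*r^2+(t-1))^2)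
    = 4/((1+t)*(t-1)) := by
  rw [integral_Ioi_of_hasDerivAt_of_nonneg (((H1_deriv ht 0)).continuousAt.continuousWithinAt)
    (fun x _ => H1_deriv ht x) (J1_nonneg ht) (H1_tendsto ht)]
  have h2 := (Ppos ht 0).ne'
  have h3 := (apos ht).ne'
  have h4 := (bpos ht).ne'
  field_simp
  norm_num
  field_simp

lemma J1_integrable {t : ℝ} (ht : 1 < t) :
    IntegrableOn (fun r : ℝ => r * (8/((1+t)*r^2+(t-1))^2)) (Ioi 0) :=
  integrableOn_Ioi_deriv_of_nonneg (((H1_deriv ht 0)).continuousAt.continuousWithinAt)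
    (fun x _ => H1_deriv ht x) (J1_nonneg ht) (H1_tendsto ht)

lemma q_pos (r : ℝ) : (0:ℝ) < 1 + r^2 := by positivity

lemma H2_deriv {t : ℝ} (ht : 1 < t) (r : ℝ) :
    HasDerivAt (fun r : ℝ => Real.log (1+r^2) - Real.log ((1+t)*r^2+(t-1))
        - t*(1+r^2)/((1+t)*r^2+(t-1)))
      (r * (4*(1-r^2)/((1+r^2)*((1+t)*r^2+(t-1))^2))) r := by
  have hq : HasDerivAt (fun r : ℝ => 1+r^2) (2*r) r := by
    simpa using ((hasDerivAt_pow 2 r).const_add 1)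
  have hp : HasDerivAt (fun r : ℝ => (1+t)*r^2+(t-1)) ((1+t)*(2*r)) r := by
    simpa using (((hasDerivAt_pow 2 r).const_mul (1+t)).add_const (t-1))
  have hqne := (q_pos r).ne'
  have hpne := (Ppos ht r).ne'
  have hlog1 : HasDerivAt (fun r : ℝ => Real.log (1+r^2)) ((1+r^2)⁻¹ * (2*r)) r :=
    HasDerivAt.comp (h₂ := Real.log) r (Real.hasDerivAt_log hqne) hq
  have hlog2 : HasDerivAt (fun r : ℝ => Real.log ((1+t)*r^2+(t-1)))
      (((1+t)*r^2+(t-1))⁻¹ * ((1+t)*(2*r))) r :=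
    HasDerivAt.comp (h₂ := Real.log) r (Real.hasDerivAt_log hpne) hp
  have hnum : HasDerivAt (fun r : ℝ => t*(1+r^2)) (t*(2*r)) r := hq.const_mul t
  have hdiv := hnum.fun_div hp hpne
  have h := (hlog1.fun_sub hlog2).fun_sub hdiv
  refine h.congr_deriv ?_
  symm
  have hpne' : r ^ 2 * (1 + t) + (t - 1) ≠ 0 := by rw [mul_comm]; exact hpne
  field_simp
  ring

lemma inv_sq_tendsto : Tendsto (fun r : ℝ => (r^2)⁻¹) atTop (𝓝 0) :=
  (tendsto_pow_atTop two_ne_zero).inv_tendsto_atTop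

lemma ratio_tendsto {c d : ℝ} (hc : 0 < c) (hd : 0 < d) :
    Tendsto (fun r : ℝ => (1+r^2)/(c*r^2+d)) atTop (𝓝 (1/c)) := by
  have h1 : Tendsto (fun r : ℝ => ((r^2)⁻¹+1)/(c+d*(r^2)⁻¹)) atTop (𝓝 ((0+1)/(c+d*0))) := by
    apply Tendsto.div
    · exact inv_sq_tendsto.add tendsto_const_nhds
    · exact tendsto_const_nhds.add (inv_sq_tendsto.const_mul d)
    · simpa using hc.ne'
  simp only [zero_add, mul_zero, add_zero] at h1
  apply Tendsto.congr' _ h1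
  filter_upwards [eventually_gt_atTop (0:ℝ)] with r hr
  have hr2 : r^2 ≠ 0 := by positivity
  have hcd : c*r^2+d ≠ 0 := by positivity
  field_simp


lemma H2_tendsto {t : ℝ} (ht : 1 < t) :
    Tendsto (fun r : ℝ => Real.log (1+r^2) - Real.log ((1+t)*r^2+(t-1))
        - t*(1+r^2)/((1+t)*r^2+(t-1))) atTop
      (𝓝 (-Real.log (1+t) - t/(1+t))) := by
  have hrat := ratio_tendsto (apos ht) (bpos ht)
  have l1 : Tendsto (fun r : ℝ => Real.log (1+r^2) - Real.log ((1+t)*r^2+(t-1)))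
      atTop (𝓝 (-Real.log (1+t))) := by
    have hcomp : Tendsto (fun r : ℝ => Real.log ((1+r^2)/((1+t)*r^2+(t-1))))
        atTop (𝓝 (Real.log (1/(1+t)))) :=
      ((Real.continuousAt_log (by positivity)).tendsto.comp hrat)
    rw [one_div, Real.log_inv] at hcomp
    apply Tendsto.congr _ hcomp
    intro r
    rw [Real.log_div (q_pos r).ne' (Ppos ht r).ne']
  have l2 : Tendsto (fun r : ℝ => t*(1+r^2)/((1+t)*r^2+(t-1)))
      atTop (𝓝 (t/(1+t))) := by
    have := hrat.const_mul t
    simp only [mul_one_div] at this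
    apply Tendsto.congr _ this
    intro r
    ring
  exact l1.sub l2

lemma J2_val {t : ℝ} (ht : 1 < t) :
    ∫ r in Ioi (0:ℝ), r * (4*(1-r^2)/((1+r^2)*((1+t)*r^2+(t-1))^2))
      = -(Real.log (1+t) - Real.log (t-1)) + 2*t/(t^2-1) := by
  have hint : IntegrableOn
      (fun r : ℝ => r * (4*(1-r^2)/((1+r^2)*((1+t)*r^2+(t-1))^2))) (Ioi 0) := by
    apply Integrable.mono' (J1_integrable ht)
    · apply Continuous.aestronglyMeasurable
      apply continuous_id.mul
      apply Continuous.div (by fun_prop) (by fun_prop)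
      intro r
      have h1 := q_pos r
      have h2 := Ppos ht r
      positivity
    · rw [ae_restrict_iff' measurableSet_Ioi]
      apply ae_of_all
      intro r hr
      have hr0 : (0:ℝ) < r := hr
      have hP := Ppos ht r
      have hq := q_pos r
      rw [Real.norm_eq_abs, abs_mul, abs_of_pos hr0, abs_div,
        abs_of_pos (by positivity : (0:ℝ) < (1+r^2)*((1+t)*r^2+(t-1))^2)]
      apply mul_le_mul_of_nonneg_left _ hr0.le
      rw [div_le_div_iff₀ (by positivity) (by positivity)]
      have habs : |4*(1-r^2)| ≤ 4*(1+r^2) := by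
        rcases abs_cases (4*(1-r^2)) with ⟨h, _⟩ | ⟨h, _⟩ <;> rw [h] <;> nlinarith [sq_nonneg r]
      calc |4*(1-r^2)| * ((1+t)*r^2+(t-1))^2
          ≤ (4*(1+r^2)) * ((1+t)*r^2+(t-1))^2 := by
            apply mul_le_mul_of_nonneg_right habs (by positivity)
        _ ≤ 8 * ((1+r^2)*((1+t)*r^2+(t-1))^2) := by nlinarith [sq_nonneg ((1+t)*r^2+(t-1)), sq_nonneg r]
  rw [integral_Ioi_of_hasDerivAt_of_tendsto ((H2_deriv ht 0).continuousAt.continuousWithinAt)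
    (fun x _ => H2_deriv ht x) hint (H2_tendsto ht)]
  have h3 := (apos ht).ne'
  have h4 := (bpos ht).ne'
  norm_num
  have h5 : t^2 - 1 = (1+t)*(t-1) := by ring
  rw [h5]
  field_simp
  ring

lemma eq1 {t : ℝ} (ht : 1 < t) (z : R2) :
    ((sphOmega z 2 + t) ^ 2)⁻¹
        * (dot3 (pdx sphOmega z) (pdx sphOmega z) + dot3 (pdy sphOmega z) (pdy sphOmega z))
      = 8/((1+t)*(z.1^2+z.2^2)+(t-1))^2 := by
  have hs : sphOmega z 2 = 1 - mu z := by simp [sphOmega]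
  rw [key1, hs]
  unfold mu
  have hD := Dpos z.1 z.2
  have hP : (0:ℝ) < (1+t)*(z.1^2+z.2^2)+(t-1) := by nlinarith [sq_nonneg z.1, sq_nonneg z.2]
  have h1 : 1 - 2/(1+z.1^2+z.2^2) + t
      = ((1+t)*(z.1^2+z.2^2)+(t-1))/(1+z.1^2+z.2^2) := by
    field_simp
    ring
  rw [h1]
  rw [div_pow]
  rw [inv_div]
  field_simp

lemma eq2 {t : ℝ} (ht : 1 < t) (z : R2) :
    ((sphOmega z 2 + t) ^ 2)⁻¹ * dot3 e3 (cross3 (pdx sphOmega z) (pdy sphOmega z))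
      = 4*(1-(z.1^2+z.2^2))/((1+(z.1^2+z.2^2))*((1+t)*(z.1^2+z.2^2)+(t-1))^2) := by
  have hs : sphOmega z 2 = 1 - mu z := by simp [sphOmega]
  rw [key2, hs]
  unfold mu
  have hD := Dpos z.1 z.2
  have hP : (0:ℝ) < (1+t)*(z.1^2+z.2^2)+(t-1) := by nlinarith [sq_nonneg z.1, sq_nonneg z.2]
  have h1 : 1 - 2/(1+z.1^2+z.2^2) + t
      = ((1+t)*(z.1^2+z.2^2)+(t-1))/(1+z.1^2+z.2^2) := by
    field_simp
    ring
  rw [h1, div_pow, inv_div]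
  field_simp
  ring

lemma int1 {t : ℝ} (ht : 1 < t) :
    (∫ z : R2, ((sphOmega z 2 + t) ^ 2)⁻¹
        * (dot3 (pdx sphOmega z) (pdx sphOmega z) + dot3 (pdy sphOmega z) (pdy sphOmega z)))
      = (4/((1+t)*(t-1))) * (2*π) := by
  have heq : (fun z : R2 => ((sphOmega z 2 + t) ^ 2)⁻¹
        * (dot3 (pdx sphOmega z) (pdx sphOmega z) + dot3 (pdy sphOmega z) (pdy sphOmega z)))
      = fun z : R2 => (fun q : ℝ => 8/((1+t)*q+(t-1))^2) (z.1^2+z.2^2) := by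
    funext z; exact eq1 ht z
  rw [heq, radial_integral (fun q : ℝ => 8/((1+t)*q+(t-1))^2)]
  congr 1
  exact J1_val ht

lemma int2 {t : ℝ} (ht : 1 < t) :
    (∫ z : R2, ((sphOmega z 2 + t) ^ 2)⁻¹
        * dot3 e3 (cross3 (pdx sphOmega z) (pdy sphOmega z)))
      = (-(Real.log (1+t) - Real.log (t-1)) + 2*t/(t^2-1)) * (2*π) := by
  have heq : (fun z : R2 => ((sphOmega z 2 + t) ^ 2)⁻¹
        * dot3 e3 (cross3 (pdx sphOmega z) (pdy sphOmega z)))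
      = fun z : R2 => (fun q : ℝ => 4*(1-q)/((1+q)*((1+t)*q+(t-1))^2)) (z.1^2+z.2^2) := by
    funext z; exact eq2 ht z
  rw [heq, radial_integral (fun q : ℝ => 4*(1-q)/((1+q)*((1+t)*q+(t-1))^2))]
  congr 1
  exact J2_val ht

lemma part1_arith {k t : ℝ} (ht : 1 < t) :
    (1/2) * ((4/((1+t)*(t-1))) * (2*π))
        - k * ((-(Real.log (1+t) - Real.log (t-1)) + 2*t/(t^2-1)) * (2*π))
      = 4 * π * (-((k*t-1)/(t^2-1)) + (k/2) * Real.log ((t+1)/(t-1))) := by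
  have h1 : Real.log ((t+1)/(t-1)) = Real.log (1+t) - Real.log (t-1) := by
    rw [show t+1 = 1+t from by ring, Real.log_div (by linarith) (by linarith)]
  rw [h1]
  have h2 : t^2 - 1 = (1+t)*(t-1) := by ring
  rw [h2]
  have h3 : (1+t) ≠ 0 := by linarith
  have h4 : t-1 ≠ 0 := by linarith
  field_simp
  ring

lemma part2 {k : ℝ} (hk : 1 < k) :
    Tendsto (fun t : ℝ => 4 * π * (-((k * t - 1) / (t ^ 2 - 1))
        + (k / 2) * Real.log ((t + 1) / (t - 1))))
      (nhdsWithin 1 (Set.Ioi 1)) atBot := by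
  -- the comparison function
  set G : ℝ → ℝ := fun t => (t-1)⁻¹ * (-(k*t-1)/(t+1) + k * Real.sqrt (t^2-1)) with hG
  have hinv : Tendsto (fun t : ℝ => (t-1)⁻¹) (nhdsWithin 1 (Set.Ioi 1)) atTop := by
    have hsub : Tendsto (fun t : ℝ => t - 1) (nhdsWithin 1 (Set.Ioi 1))
        (nhdsWithin 0 (Set.Ioi 0)) := by
      rw [tendsto_nhdsWithin_iff]
      constructor
      · have h' : Tendsto (fun t : ℝ => t - 1) (nhds 1) (nhds (1-1)) :=
          (continuous_sub_right (1:ℝ)).tendsto 1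
        norm_num at h'
        exact h'.mono_left nhdsWithin_le_nhds
      · filter_upwards [self_mem_nhdsWithin] with t ht
        simpa [Set.mem_Ioi] using (by linarith [Set.mem_Ioi.1 ht] : (0:ℝ) < t - 1)
    exact tendsto_inv_nhdsGT_zero.comp hsub
  have hb : Tendsto (fun t : ℝ => -(k*t-1)/(t+1) + k * Real.sqrt (t^2-1))
      (nhdsWithin 1 (Set.Ioi 1)) (𝓝 (-(k-1)/2)) := by
    have hc : ContinuousAt (fun t : ℝ => -(k*t-1)/(t+1) + k * Real.sqrt (t^2-1)) 1 := by
      apply ContinuousAt.add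
      · exact ContinuousAt.div (by fun_prop) (by fun_prop) (by norm_num)
      · exact continuousAt_const.mul (Real.continuous_sqrt.continuousAt.comp (by fun_prop))
    have h0 := hc.tendsto.mono_left (nhdsWithin_le_nhds (s := Set.Ioi (1:ℝ)))
    convert h0 using 2
    norm_num
  have hmain : Tendsto G (nhdsWithin 1 (Set.Ioi 1)) atBot := by
    have hneg : -(k-1)/2 < 0 := by linarith
    exact hinv.atTop_mul_neg hneg hb
  have hbound : ∀ᶠ t in nhdsWithin 1 (Set.Ioi 1),
      4 * π * (-((k * t - 1) / (t ^ 2 - 1)) + (k / 2) * Real.log ((t + 1) / (t - 1)))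
        ≤ (4 * π) * G t := by
    filter_upwards [self_mem_nhdsWithin] with t ht
    have ht1 : 1 < t := Set.mem_Ioi.1 ht
    have h4 : (0:ℝ) < t - 1 := by linarith
    have h5 : (0:ℝ) < t + 1 := by linarith
    have h6 : (0:ℝ) < t^2 - 1 := by nlinarith
    have hy : (0:ℝ) < (t+1)/(t-1) := by positivity
    -- log bound
    have hlog : Real.log ((t+1)/(t-1)) ≤ 2 * Real.sqrt ((t+1)/(t-1)) := by
      have hs : (0:ℝ) < Real.sqrt ((t+1)/(t-1)) := Real.sqrt_pos.2 hy
      have h7 : Real.log ((t+1)/(t-1)) = 2 * Real.log (Real.sqrt ((t+1)/(t-1))) := by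
        rw [Real.log_sqrt hy.le]; ring
      rw [h7]
      have := Real.log_le_sub_one_of_pos hs
      linarith
    have hsqrt : Real.sqrt ((t+1)/(t-1)) = Real.sqrt (t^2-1) / (t-1) := by
      rw [show (t+1)/(t-1) = (t^2-1)/(t-1)^2 from by field_simp; ring,
        Real.sqrt_div h6.le, Real.sqrt_sq h4.le]
    have hfrac : -((k * t - 1) / (t ^ 2 - 1)) = (t-1)⁻¹ * (-(k*t-1)/(t+1)) := by
      rw [show t^2 - 1 = (t-1)*(t+1) from by ring]
      field_simp
    have hk2 : (0:ℝ) ≤ k / 2 := by linarith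
    have hineq : -((k * t - 1) / (t ^ 2 - 1)) + (k / 2) * Real.log ((t + 1) / (t - 1)) ≤ G t := by
      rw [hG]
      have h8 : (k / 2) * Real.log ((t + 1) / (t - 1)) ≤ (k/2) * (2 * Real.sqrt ((t+1)/(t-1))) :=
        mul_le_mul_of_nonneg_left hlog hk2
      have h9 : (k/2) * (2 * Real.sqrt ((t+1)/(t-1))) = (t-1)⁻¹ * (k * Real.sqrt (t^2-1)) := by
        rw [hsqrt]
        field_simp
      calc -((k * t - 1) / (t ^ 2 - 1)) + (k / 2) * Real.log ((t + 1) / (t - 1))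
          ≤ (t-1)⁻¹ * (-(k*t-1)/(t+1)) + (t-1)⁻¹ * (k * Real.sqrt (t^2-1)) := by
            rw [← hfrac, ← h9]; linarith
        _ = (t-1)⁻¹ * (-(k*t-1)/(t+1) + k * Real.sqrt (t^2-1)) := by ring
    exact mul_le_mul_of_nonneg_left hineq (by positivity)
  have hGmul : Tendsto (fun t => (4 * π) * G t) (nhdsWithin 1 (Set.Ioi 1)) atBot :=
    hmain.const_mul_atBot (by positivity)
  exact tendsto_atBot_mono' _ hbound hGmul

end
end aux

/-- For every `t > 1`,
`E_hyp(ω + t e₃) = 4π(−(kt−1)/(t²−1) + (k/2)log((t+1)/(t−1)))`;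
this quantity tends to `−∞` as `t → 1⁺`, so `E_hyp` is unbounded from below. -/
theorem statement14 (k : ℝ) (hk : 1 < k) :
    (∀ t : ℝ, 1 < t →
      (1 / 2) * (∫ z, ((sphOmega z 2 + t) ^ 2)⁻¹
            * (dot3 (pdx sphOmega z) (pdx sphOmega z) + dot3 (pdy sphOmega z) (pdy sphOmega z)))
        - k * (∫ z, ((sphOmega z 2 + t) ^ 2)⁻¹
            * dot3 e3 (cross3 (pdx sphOmega z) (pdy sphOmega z)))
      = 4 * Real.pi * (-((k * t - 1) / (t ^ 2 - 1))
          + (k / 2) * Real.log ((t + 1) / (t - 1)))) ∧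
    Tendsto (fun t : ℝ => 4 * Real.pi * (-((k * t - 1) / (t ^ 2 - 1))
        + (k / 2) * Real.log ((t + 1) / (t - 1))))
      (nhdsWithin 1 (Set.Ioi 1)) atBot := by
  constructor
  · intro t ht
    rw [int1 ht, int2 ht]
    exact part1_arith ht
  · exact part2 hk
end
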